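/- Eccentricity is almost preserved by scaled exponential images on the unit sphere: for every μ > 0 there exists δ = δ(μ) > 0 such that the following holds. Let C_ecc > 0 and let Ẽ ⊆ B_δ(0) ⊂ ℝ² be a Borel set satisfying diam_{ℝ²}(Ẽ) ≤ C_ecc · L²(Ẽ)^{1/2}, where L² is the Lebesgue measure on ℝ². Let p ∈ ℝ³ be a unit vector, let ι : ℝ² → p^⊥ ⊂ ℝ³ be a linear isometry, let t ∈ (0,1], and set E_t := f_p(ι(t·Ẽ)). Then diam_{ℝ³}(E_t) ≤ (1+μ) · C_ecc · (μH²(E_t))^{1/2}, where μH² denotes the 2-dimensional Hausdorff measure on ℝ³ and the diameter is taken with respect to the Euclidean distance. -/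

import Mathlib

open MeasureTheory InnerProductSpace
open scoped Pointwise ENNReal NNReal

/-- The exponential map of the unit sphere `S² ⊂ ℝ³` at a unit vector `p`, defined on
`p^⊥ ≅ T_p S²` by `f_p(v) = cos(‖v‖)·p + (sin(‖v‖)/‖v‖)·v` for `v ≠ 0` and `f_p(0) = p`
(the formula below realizes this convention since `c • 0 = 0`). -/
noncomputable def sphereExp (p v : EuclideanSpace ℝ (Fin 3)) : EuclideanSpace ℝ (Fin 3) :=
  Real.cos ‖v‖ • p + (Real.sin ‖v‖ / ‖v‖) • v

section Analytic

lemma EAP.sin_div_lb {δ y : ℝ} (hδ1 : δ ≤ 1) (hy : 0 ≤ y) (hyδ : y ≤ δ) :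
    (1 - δ^2/4) * y ≤ Real.sin y := by
  rcases eq_or_lt_of_le hy with h0 | h0
  · simp [← h0]
  · have h := Real.sin_gt_sub_cube h0
    nlinarith [pow_le_pow_left₀ hy hyδ 2]

lemma EAP.cos_lb {δ x : ℝ} (hδ1 : δ ≤ 1) (hx : |x| ≤ δ) :
    (1 - δ^2/4)^2 * x^2 ≤ 2 - 2 * Real.cos x := by
  have hδ0 : 0 ≤ δ := le_trans (abs_nonneg x) hx
  have hid : Real.sin (x/2) ^ 2 = 1/2 - Real.cos x / 2 := by
    have := Real.sin_sq_eq_half_sub (x/2)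
    rwa [show 2 * (x/2) = x by ring] at this
  have hc : 0 ≤ 1 - δ^2/4 := by nlinarith
  rcases abs_le.1 hx with ⟨h1, h2⟩
  rcases le_or_gt 0 x with hx0 | hx0
  · have hs := EAP.sin_div_lb (δ := δ/2) (by linarith) (by linarith : (0:ℝ) ≤ x/2) (by linarith)
    have hs' : (1 - δ^2/4) * (x/2) ≤ Real.sin (x/2) := by nlinarith
    nlinarith [sq_nonneg (Real.sin (x/2)), mul_nonneg hc (by linarith : (0:ℝ) ≤ x/2)]
  · have hs := EAP.sin_div_lb (δ := δ/2) (by linarith) (by linarith : (0:ℝ) ≤ -x/2) (by linarith)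
    have hs' : (1 - δ^2/4) * (-x/2) ≤ Real.sin (-x/2) := by nlinarith
    rw [show -x/2 = -(x/2) by ring, Real.sin_neg] at hs'
    nlinarith [mul_nonneg hc (by linarith : (0:ℝ) ≤ -x/2)]

lemma EAP.cos_ub {x : ℝ} : 2 - 2 * Real.cos x ≤ x^2 := by
  have := Real.one_sub_sq_div_two_le_cos (x := x)
  linarith

lemma EAP.key_ineq {δ a b s : ℝ} (hδ1 : δ ≤ 1) (ha : 0 ≤ a) (haδ : a ≤ δ) (hb : 0 ≤ b)
    (hbδ : b ≤ δ) (hs : |s| ≤ a * b) :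
    (1 - δ^2/4)^2 * (a^2 + b^2 - 2*s)
      ≤ 2 - 2*(Real.cos a * Real.cos b + (Real.sin a / a) * (Real.sin b / b) * s)
    ∧ 2 - 2*(Real.cos a * Real.cos b + (Real.sin a / a) * (Real.sin b / b) * s)
      ≤ a^2 + b^2 - 2*s := by
  have hδ0 : 0 ≤ δ := le_trans ha haδ
  set c := 1 - δ^2/4 with hc
  have hc0 : 0 ≤ c := by rw [hc]; nlinarith
  set qa := Real.sin a / a with hqa
  set qb := Real.sin b / b with hqb
  have hq : qa * qb * (a*b) = Real.sin a * Real.sin b := by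
    rcases eq_or_lt_of_le ha with h0 | h0
    · simp [hqa, ← h0]
    rcases eq_or_lt_of_le hb with h0' | h0'
    · simp [hqb, ← h0']
    rw [hqa, hqb]
    field_simp
  have hsab : s ≤ a * b := (abs_le.1 hs).2
  have hcos : Real.cos (a - b) = Real.cos a * Real.cos b + Real.sin a * Real.sin b :=
    Real.cos_sub a b
  have h1 : 2 - 2 * Real.cos (a-b) ≤ (a-b)^2 := EAP.cos_ub
  have h2 : c^2 * (a-b)^2 ≤ 2 - 2 * Real.cos (a-b) := by
    apply EAP.cos_lb hδ1
    rw [abs_sub_le_iff]; constructor <;> linarith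
  have hprod1 : c^2 * (a*b - s) ≤ qa * qb * (a*b) - qa * qb * s := by
    rcases eq_or_lt_of_le ha with h0 | h0
    · have hs0 : s = 0 := by rw [← h0] at hs; simpa using hs
      simp [← h0, hs0]
    rcases eq_or_lt_of_le hb with h0' | h0'
    · have hs0 : s = 0 := by rw [← h0'] at hs; simpa using hs
      simp [← h0', hs0]
    have hqa' : c ≤ qa := by
      rw [hqa, le_div_iff₀ h0, hc]
      exact EAP.sin_div_lb hδ1 ha haδ
    have hqb' : c ≤ qb := by
      rw [hqb, le_div_iff₀ h0', hc]
      exact EAP.sin_div_lb hδ1 hb hbδ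
    have : c^2 ≤ qa * qb := by nlinarith
    have hab : 0 ≤ a*b - s := by linarith
    nlinarith
  have hprod2 : qa * qb * (a*b) - qa * qb * s ≤ a*b - s := by
    have hqa1 : qa ≤ 1 := by
      rcases eq_or_lt_of_le ha with h0 | h0
      · simp [hqa, ← h0]
      · rw [hqa, div_le_one h0]; exact Real.sin_le ha
    have hqb1 : qb ≤ 1 := by
      rcases eq_or_lt_of_le hb with h0 | h0
      · simp [hqb, ← h0]
      · rw [hqb, div_le_one h0]; exact Real.sin_le hb
    have hqa0 : 0 ≤ qa := by
      rcases eq_or_lt_of_le ha with h0 | h0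
      · simp [hqa, ← h0]
      · exact div_nonneg (Real.sin_nonneg_of_nonneg_of_le_pi ha
          (by linarith [Real.pi_gt_three])) ha
    have hqb0 : 0 ≤ qb := by
      rcases eq_or_lt_of_le hb with h0 | h0
      · simp [hqb, ← h0]
      · exact div_nonneg (Real.sin_nonneg_of_nonneg_of_le_pi hb
          (by linarith [Real.pi_gt_three])) hb
    have hab : 0 ≤ a*b - s := by linarith
    have hq1 : qa * qb ≤ 1 := by nlinarith
    nlinarith [mul_le_mul_of_nonneg_right hq1 hab]
  have hid : 2 - 2*(Real.cos a * Real.cos b + qa * qb * s)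
      = (2 - 2 * Real.cos (a-b)) + 2 * (qa*qb*(a*b) - qa*qb*s) := by
    rw [hcos, ← hq]; ring
  have e1 : c^2*(a^2+b^2-2*s) = c^2*(a-b)^2 + 2*(c^2*(a*b-s)) := by ring
  have e2 : a^2+b^2-2*s = (a-b)^2 + 2*(a*b-s) := by ring
  constructor
  · rw [hid]; linarith
  · rw [hid]; linarith

end Analytic

section Geometry

lemma EAP.sphereExp_inner (p v w : EuclideanSpace ℝ (Fin 3)) (hp : ‖p‖ = 1)
    (hv : ⟪v, p⟫_ℝ = 0) (hw : ⟪w, p⟫_ℝ = 0) :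
    ⟪sphereExp p v, sphereExp p w⟫_ℝ
      = Real.cos ‖v‖ * Real.cos ‖w‖
        + (Real.sin ‖v‖ / ‖v‖) * (Real.sin ‖w‖ / ‖w‖) * ⟪v, w⟫_ℝ := by
  have hpv : ⟪p, v⟫_ℝ = 0 := by rw [real_inner_comm]; exact hv
  have hpw : ⟪p, w⟫_ℝ = 0 := by rw [real_inner_comm]; exact hw
  have hpp : ⟪p, p⟫_ℝ = 1 := by
    rw [real_inner_self_eq_norm_sq, hp]; norm_num
  simp only [sphereExp, inner_add_left, inner_add_right, real_inner_smul_left,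
    real_inner_smul_right, hpp, hpv, hpw, hv, hw]
  ring

lemma EAP.sphereExp_norm_sq (p v : EuclideanSpace ℝ (Fin 3)) (hp : ‖p‖ = 1)
    (hv : ⟪v, p⟫_ℝ = 0) : ‖sphereExp p v‖^2 = 1 := by
  have h := EAP.sphereExp_inner p v v hp hv hv
  rcases eq_or_ne v 0 with rfl | hv0
  · simp [sphereExp, hp]
  · have hn : (0:ℝ) < ‖v‖ := norm_pos_iff.2 hv0
    have hvv : ⟪v, v⟫_ℝ = ‖v‖^2 := real_inner_self_eq_norm_sq v
    rw [hvv] at h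
    rw [← real_inner_self_eq_norm_sq, h]
    field_simp
    nlinarith [Real.sin_sq_add_cos_sq ‖v‖]

lemma EAP.sphereExp_dist_sq (p v w : EuclideanSpace ℝ (Fin 3)) (hp : ‖p‖ = 1)
    (hv : ⟪v, p⟫_ℝ = 0) (hw : ⟪w, p⟫_ℝ = 0) :
    ‖sphereExp p v - sphereExp p w‖^2
      = 2 - 2 * (Real.cos ‖v‖ * Real.cos ‖w‖
        + (Real.sin ‖v‖ / ‖v‖) * (Real.sin ‖w‖ / ‖w‖) * ⟪v, w⟫_ℝ) := by
  rw [norm_sub_sq_real, EAP.sphereExp_norm_sq p v hp hv, EAP.sphereExp_norm_sq p w hp hw,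
    EAP.sphereExp_inner p v w hp hv hw]
  ring

lemma EAP.sphereExp_dist_bounds {δ : ℝ} (hδ1 : δ ≤ 1) (p v w : EuclideanSpace ℝ (Fin 3))
    (hp : ‖p‖ = 1) (hv : ⟪v, p⟫_ℝ = 0) (hw : ⟪w, p⟫_ℝ = 0)
    (hvδ : ‖v‖ ≤ δ) (hwδ : ‖w‖ ≤ δ) :
    (1 - δ^2/4) * ‖v - w‖ ≤ ‖sphereExp p v - sphereExp p w‖
    ∧ ‖sphereExp p v - sphereExp p w‖ ≤ ‖v - w‖ := by
  have hδ0 : 0 ≤ δ := le_trans (norm_nonneg v) hvδ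
  have hc0 : 0 ≤ 1 - δ^2/4 := by nlinarith
  have hkey := EAP.key_ineq hδ1 (norm_nonneg v) hvδ (norm_nonneg w) hwδ
    (abs_real_inner_le_norm v w)
  have hvw : ‖v - w‖^2 = ‖v‖^2 + ‖w‖^2 - 2 * ⟪v, w⟫_ℝ := by
    rw [norm_sub_sq_real]; ring
  have hd := EAP.sphereExp_dist_sq p v w hp hv hw
  constructor
  · have h2 : ((1 - δ^2/4) * ‖v - w‖)^2 ≤ ‖sphereExp p v - sphereExp p w‖^2 := by
      rw [hd, mul_pow, hvw]
      exact hkey.1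
    have := Real.sqrt_le_sqrt h2
    rwa [Real.sqrt_sq (by positivity), Real.sqrt_sq (norm_nonneg _)] at this
  · have h2 : ‖sphereExp p v - sphereExp p w‖^2 ≤ ‖v - w‖^2 := by
      rw [hd, hvw]
      exact hkey.2
    have := Real.sqrt_le_sqrt h2
    rwa [Real.sqrt_sq (norm_nonneg _), Real.sqrt_sq (norm_nonneg _)] at this

end Geometry

section MeasureStuff

lemma EAP.coord_dist_le (y z : EuclideanSpace ℝ (Fin 2)) (i : Fin 2) :
    |y i - z i| ≤ dist y z := by
  rw [EuclideanSpace.dist_eq]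
  have h1 : |y i - z i| = Real.sqrt (dist (y i) (z i)^2) := by
    rw [Real.dist_eq, Real.sqrt_sq_eq_abs, abs_abs]
  rw [h1]
  apply Real.sqrt_le_sqrt
  exact Finset.single_le_sum (f := fun j => dist (y j) (z j)^2)
    (fun j _ => sq_nonneg _) (Finset.mem_univ i)

lemma EAP.volume_le_ediam_sq (s : Set (EuclideanSpace ℝ (Fin 2))) :
    volume s ≤ EMetric.diam s ^ (2:ℝ) := by
  rcases s.eq_empty_or_nonempty with rfl | ⟨x₀, hx₀⟩
  · simp
  rcases eq_or_ne (EMetric.diam s) (⊤:ENNReal) with hd | hd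
  · rw [hd, ENNReal.top_rpow_of_pos (by norm_num : (0:ℝ) < 2)]; exact le_top
  set d := (EMetric.diam s).toReal with hdd
  have hd0 : 0 ≤ d := ENNReal.toReal_nonneg
  have hdist : ∀ y ∈ s, ∀ z ∈ s, dist y z ≤ d := fun y hy z hz =>
    Metric.dist_le_diam_of_mem (Metric.isBounded_iff_ediam_ne_top.2 hd) hy hz
  have hbdd : ∀ i : Fin 2, BddBelow ((fun y : EuclideanSpace ℝ (Fin 2) => y i) '' s) := by
    intro i
    refine ⟨x₀ i - d, ?_⟩
    rintro _ ⟨y, hy, rfl⟩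
    have := EAP.coord_dist_le x₀ y i
    have := hdist x₀ hx₀ y hy
    linarith [(abs_sub_le_iff.1 (EAP.coord_dist_le x₀ y i)).1]
  set a : Fin 2 → ℝ := fun i => sInf ((fun y : EuclideanSpace ℝ (Fin 2) => y i) '' s) with ha
  have hmem : ∀ y ∈ s, ∀ i, y i ∈ Set.Icc (a i) (a i + d) := by
    intro y hy i
    constructor
    · exact csInf_le (hbdd i) ⟨y, hy, rfl⟩
    · have : a i ≥ y i - d := by
        rw [ha]
        simp only
        apply le_csInf (Set.Nonempty.image _ ⟨x₀, hx₀⟩)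
        rintro _ ⟨z, hz, rfl⟩
        have h1 := (abs_sub_le_iff.1 (EAP.coord_dist_le y z i)).1
        have h2 := hdist y hy z hz
        linarith
      linarith
  set e := (MeasurableEquiv.toLp 2 (Fin 2 → ℝ)).symm with he
  have hsub : s ⊆ e ⁻¹' (Set.univ.pi fun i => Set.Icc (a i) (a i + d)) := by
    intro y hy
    simp only [Set.mem_preimage, Set.mem_pi, Set.mem_univ, forall_true_left]
    intro i
    exact hmem y hy i
  calc volume s ≤ volume (e ⁻¹' (Set.univ.pi fun i => Set.Icc (a i) (a i + d))) :=
        measure_mono hsub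
    _ = volume (Set.univ.pi fun i => Set.Icc (a i) (a i + d)) := by
        rw [(EuclideanSpace.volume_preserving_symm_measurableEquiv_toLp (Fin 2)).measure_preimage
          (MeasurableSet.univ_pi fun i => measurableSet_Icc).nullMeasurableSet]
    _ = ∏ i : Fin 2, ENNReal.ofReal (a i + d - a i) := by
        rw [volume_pi_pi]
        simp [Real.volume_Icc]
    _ = (ENNReal.ofReal d) ^ (2:ℕ) := by
        simp [add_sub_cancel_left, Finset.prod_const]
    _ = EMetric.diam s ^ (2:ℝ) := by
        rw [hdd, ENNReal.ofReal_toReal hd, ← ENNReal.rpow_natCast]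
        norm_num

lemma EAP.volume_le_hausdorff :
    (volume : Measure (EuclideanSpace ℝ (Fin 2))) ≤ μH[2] :=
  MeasureTheory.Measure.le_hausdorffMeasure 2 _ 1 one_pos
    (fun s _ => EAP.volume_le_ediam_sq s)

lemma EAP.hausdorff_ball_lt_top {δ : ℝ} :
    μH[2] (Metric.ball (0 : EuclideanSpace ℝ (Fin 2)) δ) < ⊤ := by
  rw [show (2:ℝ) = ((Module.finrank ℝ (EuclideanSpace ℝ (Fin 2)) : ℕ) : ℝ) by simp]
  exact measure_ball_lt_top

end MeasureStuff

set_option maxHeartbeats 1000000 in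
/-- **Eccentricity is almost preserved by scaled exponential images on the unit sphere.**
For every `μ > 0` there exists `δ = δ(μ) > 0` such that: for every `C_ecc > 0` and every
Borel set `Ẽ ⊆ B_δ(0) ⊂ ℝ²` with `diam(Ẽ) ≤ C_ecc · L²(Ẽ)^{1/2}`, every unit vector
`p ∈ ℝ³`, every linear isometry `ι : ℝ² → p^⊥ ⊂ ℝ³`, and every `t ∈ (0,1]`, the set
`E_t := f_p(ι(t·Ẽ))` satisfies `diam_{ℝ³}(E_t) ≤ (1+μ)·C_ecc·(μH²(E_t))^{1/2}`. -/
theorem eccentricity_almost_preserved (μ : ℝ) (hμ : 0 < μ) :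
    ∃ δ > 0,
      ∀ Cecc : ℝ, 0 < Cecc →
      ∀ Et : Set (EuclideanSpace ℝ (Fin 2)), MeasurableSet Et →
        Et ⊆ Metric.ball 0 δ →
        Metric.diam Et ≤ Cecc * Real.sqrt (volume Et).toReal →
      ∀ p : EuclideanSpace ℝ (Fin 3), ‖p‖ = 1 →
      ∀ ι : EuclideanSpace ℝ (Fin 2) →ₗᵢ[ℝ] EuclideanSpace ℝ (Fin 3),
        (∀ v, ⟪ι v, p⟫_ℝ = 0) →
      ∀ t : ℝ, t ∈ Set.Ioc (0 : ℝ) 1 →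
        Metric.diam (sphereExp p '' (ι '' (t • Et))) ≤
          (1 + μ) * Cecc *
            Real.sqrt (μH[2] (sphereExp p '' (ι '' (t • Et)))).toReal := by
  have hδpos : 0 < min 1 (Real.sqrt (μ / (1+μ))) :=
    lt_min one_pos (Real.sqrt_pos.2 (by positivity))
  refine ⟨min 1 (Real.sqrt (μ / (1+μ))), hδpos, ?_⟩
  intro Cecc hC Et hEtmeas hEtsub hEtdiam p hp ι hι t ht
  obtain ⟨ht0, ht1⟩ := ht
  set δ := min 1 (Real.sqrt (μ / (1+μ))) with hδdef
  have hδ1 : δ ≤ 1 := min_le_left _ _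
  have hδ0 : 0 < δ := hδpos
  have hδsq : δ^2 ≤ μ / (1+μ) := by
    have h1 : δ ≤ Real.sqrt (μ/(1+μ)) := min_le_right _ _
    have h2 := Real.sq_sqrt (by positivity : (0:ℝ) ≤ μ/(1+μ))
    nlinarith [hδ0.le]
  set c := 1 - δ^2/4 with hcdef
  have hδle1 : δ^2 ≤ 1 := by nlinarith
  have hc0 : (0:ℝ) < c := by rw [hcdef]; nlinarith
  have hcμ : 1 / c ≤ 1 + μ := by
    rw [div_le_iff₀ hc0, hcdef]
    have hμ1 : (0:ℝ) < 1 + μ := by linarith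
    have hkey : (1+μ) * δ^2 ≤ μ := by
      calc (1+μ)*δ^2 ≤ (1+μ)*(μ/(1+μ)) := by nlinarith
        _ = μ := by field_simp
    nlinarith
  set g : EuclideanSpace ℝ (Fin 2) → EuclideanSpace ℝ (Fin 3) :=
    fun x => sphereExp p (ι (t • x)) with hg
  have himg : sphereExp p '' (ι '' (t • Et)) = g '' Et := by
    rw [← Set.image_smul, Set.image_image, Set.image_image, hg]
  rw [himg]
  have hnorm : ∀ x : EuclideanSpace ℝ (Fin 2),
      x ∈ Metric.ball (0:EuclideanSpace ℝ (Fin 2)) δ → ‖ι (t • x)‖ ≤ δ := by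
    intro x hx
    rw [ι.norm_map, norm_smul, Real.norm_eq_abs, abs_of_pos ht0]
    have hxδ : ‖x‖ < δ := by rwa [← mem_ball_zero_iff]
    nlinarith [norm_nonneg x]
  have hdg : ∀ x y : EuclideanSpace ℝ (Fin 2), ‖ι (t•x) - ι (t•y)‖ = t * dist x y := by
    intro x y
    rw [← map_sub, ι.norm_map, ← smul_sub, norm_smul, Real.norm_eq_abs, abs_of_pos ht0,
      dist_eq_norm]
  have hub : ∀ x ∈ Metric.ball (0:EuclideanSpace ℝ (Fin 2)) δ,
      ∀ y ∈ Metric.ball (0:EuclideanSpace ℝ (Fin 2)) δ,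
      dist (g x) (g y) ≤ t * dist x y := by
    intro x hx y hy
    have h := (EAP.sphereExp_dist_bounds hδ1 p (ι (t•x)) (ι (t•y)) hp (hι _) (hι _)
      (hnorm x hx) (hnorm y hy)).2
    simp only [hg]
    rw [dist_eq_norm]
    calc ‖sphereExp p (ι (t•x)) - sphereExp p (ι (t•y))‖ ≤ ‖ι (t•x) - ι (t•y)‖ := h
      _ = t * dist x y := hdg x y
  have hlb : ∀ x ∈ Metric.ball (0:EuclideanSpace ℝ (Fin 2)) δ,
      ∀ y ∈ Metric.ball (0:EuclideanSpace ℝ (Fin 2)) δ,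
      c * t * dist x y ≤ dist (g x) (g y) := by
    intro x hx y hy
    have h := (EAP.sphereExp_dist_bounds hδ1 p (ι (t•x)) (ι (t•y)) hp (hι _) (hι _)
      (hnorm x hx) (hnorm y hy)).1
    rw [hdg x y] at h
    simp only [hg]
    rw [dist_eq_norm]
    calc c * t * dist x y = (1 - δ^2/4) * (t * dist x y) := by rw [hcdef]; ring
      _ ≤ _ := h
  have hEtbdd : Bornology.IsBounded Et := Metric.isBounded_ball.subset hEtsub
  have hdiamEt0 : 0 ≤ Metric.diam Et := Metric.diam_nonneg
  have hdiam_img : Metric.diam (g '' Et) ≤ t * Metric.diam Et := by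
    apply Metric.diam_le_of_forall_dist_le (by positivity)
    rintro u ⟨x, hx, rfl⟩ v ⟨y, hy, rfl⟩
    calc dist (g x) (g y) ≤ t * dist x y := hub x (hEtsub hx) y (hEtsub hy)
      _ ≤ t * Metric.diam Et :=
        mul_le_mul_of_nonneg_left (Metric.dist_le_diam_of_mem hEtbdd hx hy) ht0.le
  have hct : 0 < c * t := mul_pos hc0 ht0
  have hgInj : Set.InjOn g Et := by
    intro x hx y hy hxy
    have h := hlb x (hEtsub hx) y (hEtsub hy)
    rw [hxy, dist_self] at h
    have : dist x y ≤ 0 := by nlinarith [dist_nonneg (x := x) (y := y)]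
    exact dist_le_zero.1 (le_antisymm this dist_nonneg).le
  set f := Function.invFunOn g Et with hf
  have hfmem : ∀ u ∈ g '' Et, f u ∈ Et ∧ g (f u) = u := by
    rintro u ⟨x, hx, rfl⟩
    exact ⟨Function.invFunOn_mem ⟨x, hx, rfl⟩, Function.invFunOn_eq ⟨x, hx, rfl⟩⟩
  set K : ℝ≥0 := Real.toNNReal (1/(c*t)) with hK
  have hKcoe : (K:ℝ) = 1/(c*t) := Real.coe_toNNReal _ (by positivity)
  have hfLip : LipschitzOnWith K f (g '' Et) := by
    rw [lipschitzOnWith_iff_dist_le_mul]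
    intro u hu v hv
    obtain ⟨hu1, hu2⟩ := hfmem u hu
    obtain ⟨hv1, hv2⟩ := hfmem v hv
    have h1 := hlb (f u) (hEtsub hu1) (f v) (hEtsub hv1)
    rw [hu2, hv2] at h1
    rw [hKcoe, div_mul_eq_mul_div, one_mul, le_div_iff₀ hct]
    nlinarith [h1]
  have hfim : f '' (g '' Et) = Et := by
    apply Set.Subset.antisymm
    · rintro _ ⟨u, hu, rfl⟩
      exact (hfmem u hu).1
    · intro x hx
      refine ⟨g x, Set.mem_image_of_mem _ hx, ?_⟩
      exact hgInj (hfmem _ (Set.mem_image_of_mem g hx)).1 hx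
        (hfmem _ (Set.mem_image_of_mem g hx)).2
  set M := μH[(2:ℝ)] (g '' Et) with hM
  have hmeas1 : volume Et ≤ μH[(2:ℝ)] Et := Measure.le_iff'.1 EAP.volume_le_hausdorff Et
  have hmeas2 : μH[(2:ℝ)] Et ≤ (K:ℝ≥0∞)^(2:ℝ) * M := by
    calc μH[(2:ℝ)] Et = μH[(2:ℝ)] (f '' (g '' Et)) := by rw [hfim]
      _ ≤ (K:ℝ≥0∞)^(2:ℝ) * M := hfLip.hausdorffMeasure_image_le (by norm_num)
  have hMlt : M < ⊤ := by
    have h1 : M ≤ μH[(2:ℝ)] (g '' Metric.ball (0:EuclideanSpace ℝ (Fin 2)) δ) :=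
      measure_mono (Set.image_mono (f := g) hEtsub)
    have hgLip : LipschitzOnWith 1 g (Metric.ball (0:EuclideanSpace ℝ (Fin 2)) δ) := by
      rw [lipschitzOnWith_iff_dist_le_mul]
      intro x hx y hy
      calc dist (g x) (g y) ≤ t * dist x y := hub x hx y hy
        _ ≤ 1 * dist x y := by nlinarith [dist_nonneg (x:=x) (y:=y)]
      -- coe of 1
    have h2 := hgLip.hausdorffMeasure_image_le (by norm_num : (0:ℝ) ≤ 2)
    calc M ≤ ((1:ℝ≥0):ℝ≥0∞)^(2:ℝ) * μH[(2:ℝ)] (Metric.ball (0:EuclideanSpace ℝ (Fin 2)) δ) :=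
        h1.trans h2
      _ < ⊤ := by
        simp only [ENNReal.coe_one, ENNReal.one_rpow, one_mul]
        exact EAP.hausdorff_ball_lt_top
  have hVlt : volume Et < ⊤ := by
    calc volume Et ≤ volume (Metric.ball (0:EuclideanSpace ℝ (Fin 2)) δ) := measure_mono hEtsub
      _ < ⊤ := measure_ball_lt_top
  have hrpow : ((K:ℝ≥0∞)^(2:ℝ)) = (K:ℝ≥0∞) * (K:ℝ≥0∞) := by
    rw [show (2:ℝ) = ((2:ℕ):ℝ) by norm_num, ENNReal.rpow_natCast]; ring
  have hchain : volume Et ≤ (K:ℝ≥0∞) * (K:ℝ≥0∞) * M := by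
    rw [← hrpow]; exact hmeas1.trans hmeas2
  have hreal : (volume Et).toReal ≤ (K:ℝ) * (K:ℝ) * M.toReal := by
    have hfin : (K:ℝ≥0∞) * (K:ℝ≥0∞) * M ≠ ⊤ :=
      ENNReal.mul_ne_top (ENNReal.mul_ne_top ENNReal.coe_ne_top ENNReal.coe_ne_top) hMlt.ne
    have h := ENNReal.toReal_mono hfin hchain
    rwa [ENNReal.toReal_mul, ENNReal.toReal_mul, ENNReal.coe_toReal] at h
  have hsqrt : Real.sqrt (volume Et).toReal ≤ (K:ℝ) * Real.sqrt M.toReal := by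
    have h1 := Real.sqrt_le_sqrt hreal
    rwa [show (K:ℝ)*(K:ℝ)*M.toReal = ((K:ℝ))^2 * M.toReal by ring,
      Real.sqrt_mul (sq_nonneg _), Real.sqrt_sq (NNReal.coe_nonneg K)] at h1
  have hMs : 0 ≤ Real.sqrt M.toReal := Real.sqrt_nonneg _
  calc Metric.diam (g '' Et) ≤ t * Metric.diam Et := hdiam_img
    _ ≤ t * (Cecc * Real.sqrt (volume Et).toReal) := mul_le_mul_of_nonneg_left hEtdiam ht0.le
    _ ≤ t * (Cecc * ((K:ℝ) * Real.sqrt M.toReal)) :=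
        mul_le_mul_of_nonneg_left (mul_le_mul_of_nonneg_left hsqrt hC.le) ht0.le
    _ = (1/c) * Cecc * Real.sqrt M.toReal := by
        rw [hKcoe]; field_simp
    _ ≤ (1 + μ) * Cecc * Real.sqrt M.toReal :=
        mul_le_mul_of_nonneg_right (mul_le_mul_of_nonneg_right hcμ hC.le) hMs
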